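/- Fix s ∈ [0,1] and let m_s = ½(δ_s + δ_{1−s}). For every σ ∈ M_N(ℂ) positive definite with Tr σ = 1, the inverse of the invertible linear map M_{m_s}(A) = ½(σ^s A σ^{1−s} + σ^{1−s} A σ^s) on M_N(ℂ) is completely positive. Equivalently, for any λ_1,…,λ_N > 0, the N×N matrix whose (i,j) entry is 2 / (λ_i^s λ_j^{1−s} + λ_i^{1−s} λ_j^s) is positive semidefinite. -/

import Mathlib

open MeasureTheory Matrix
open scoped ComplexOrder

noncomputable section

/-- The algebra of `N × N` complex matrices. -/
abbrev Mat (N : ℕ) := Matrix (Fin N) (Fin N) ℂ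

variable {N : ℕ}

/-- Real power `σ^s` of a positive definite matrix, defined via the spectral decomposition. -/
noncomputable def mpow (σ : Mat N) (hσ : σ.PosDef) (s : ℝ) : Mat N :=
  (hσ.1.eigenvectorUnitary : Mat N) *
    Matrix.diagonal (fun i => ((hσ.1.eigenvalues i ^ s : ℝ) : ℂ)) *
    star (hσ.1.eigenvectorUnitary : Mat N)

/-- Complete positivity of a linear map on `M_N(ℂ)`: existence of a Kraus representation. -/
def IsCP (Φ : Mat N →ₗ[ℂ] Mat N) : Prop :=
  ∃ (M : ℕ) (V : Fin M → Mat N), ∀ A, Φ A = ∑ j, (V j)ᴴ * A * V j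

/-- The KMS inner product `⟨B,A⟩_KMS = Tr[Bᴴ σ^{1/2} A σ^{1/2}]`. -/
def kmsInner (σ : Mat N) (hσ : σ.PosDef) (B A : Mat N) : ℂ :=
  (Bᴴ * mpow σ hσ (1/2) * A * mpow σ hσ (1/2)).trace

/-- Self-adjointness with respect to the KMS inner product. -/
def IsKMSSelfAdjoint (σ : Mat N) (hσ : σ.PosDef) (Φ : Mat N →ₗ[ℂ] Mat N) : Prop :=
  ∀ A B, kmsInner σ hσ B (Φ A) = kmsInner σ hσ (Φ B) A


lemma exp_int (c : ℝ) (hc : 0 < c) :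
    ∫ t in Set.Ioi (0:ℝ), Real.exp (-(c*t)) = 1/c := by
  have h := integral_comp_mul_left_Ioi (fun x => Real.exp (-x)) 0 hc
  simp only [mul_zero, smul_eq_mul, integral_exp_neg_Ioi_zero] at h
  rw [h]
  field_simp

lemma cauchy_psd {n : ℕ} (r : Fin n → ℝ) (hr : ∀ i, 0 < r i) :
    Matrix.PosSemidef (Matrix.of fun i j : Fin n => 1 / (r i + r j)) := by
  rw [Matrix.posSemidef_iff_dotProduct_mulVec]
  constructor
  · ext i j
    simp [Matrix.conjTranspose_apply, add_comm]
  · intro x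
    have hint : ∀ i j : Fin n, IntegrableOn
        (fun t => (x i * Real.exp (-(r i * t))) * (x j * Real.exp (-(r j * t)))) (Set.Ioi 0) := by
      intro i j
      have h := exp_neg_integrableOn_Ioi 0 (show 0 < r i + r j from add_pos (hr i) (hr j))
      have he : (fun t => (x i * Real.exp (-(r i * t))) * (x j * Real.exp (-(r j * t))))
          = fun t => (x i * x j) * Real.exp (-(r i + r j) * t) := by
        funext t
        rw [show -(r i + r j) * t = -(r i * t) + -(r j * t) by ring, Real.exp_add]
        ring
      rw [he]
      exact h.const_mul _
    have key : ∀ i j : Fin n, x i * (1/(r i + r j) * x j)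
        = ∫ t in Set.Ioi (0:ℝ), (x i * Real.exp (-(r i * t))) * (x j * Real.exp (-(r j * t))) := by
      intro i j
      have h1 : (∫ t in Set.Ioi (0:ℝ), (x i * Real.exp (-(r i * t))) * (x j * Real.exp (-(r j * t))))
          = (x i * x j) * ∫ t in Set.Ioi (0:ℝ), Real.exp (-((r i + r j) * t)) := by
        rw [← MeasureTheory.integral_const_mul]
        congr 1
        funext t
        rw [show -((r i + r j) * t) = -(r i * t) + -(r j * t) by ring, Real.exp_add]
        ring
      rw [h1, exp_int _ (add_pos (hr i) (hr j))]
      ring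
    have expand : star x ⬝ᵥ (Matrix.of fun i j : Fin n => 1 / (r i + r j)) *ᵥ x
        = ∑ i, ∑ j, x i * (1 / (r i + r j) * x j) := by
      simp [dotProduct, Matrix.mulVec, Finset.mul_sum]
    rw [expand]
    simp_rw [key]
    have h1 : ∀ i : Fin n, IntegrableOn
        (fun t => ∑ j, (x i * Real.exp (-(r i * t))) * (x j * Real.exp (-(r j * t)))) (Set.Ioi 0) :=
      fun i => MeasureTheory.integrable_finset_sum _ (fun j _ => hint i j)
    calc (0:ℝ) ≤ ∫ t in Set.Ioi (0:ℝ), ∑ i, ∑ j,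
          (x i * Real.exp (-(r i * t))) * (x j * Real.exp (-(r j * t))) := by
          apply integral_nonneg
          intro t
          simp only [Pi.zero_apply]
          rw [show ∑ i, ∑ j, (x i * Real.exp (-(r i * t))) * (x j * Real.exp (-(r j * t)))
            = (∑ i, x i * Real.exp (-(r i * t)))^2 by rw [sq, Finset.sum_mul_sum]]
          positivity
      _ = ∑ i, ∫ t in Set.Ioi (0:ℝ), ∑ j,
          (x i * Real.exp (-(r i * t))) * (x j * Real.exp (-(r j * t))) :=
          MeasureTheory.integral_finset_sum _ (fun i _ => h1 i)
      _ = ∑ i, ∑ j, ∫ t in Set.Ioi (0:ℝ),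
          (x i * Real.exp (-(r i * t))) * (x j * Real.exp (-(r j * t))) :=
          Finset.sum_congr rfl fun i _ => MeasureTheory.integral_finset_sum _ (fun j _ => hint i j)

lemma part2 {n : ℕ} (s : ℝ) (lam : Fin n → ℝ) (hlam : ∀ i, 0 < lam i) :
    Matrix.PosSemidef (Matrix.of fun i j : Fin n =>
        (2 / (lam i ^ s * lam j ^ (1 - s) + lam i ^ (1 - s) * lam j ^ s) : ℝ)) := by
  set r : Fin n → ℝ := fun i => lam i ^ (1 - 2*s) with hr
  set d : Fin n → ℝ := fun i => Real.sqrt 2 * lam i ^ (-s) with hd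
  have hrpos : ∀ i, 0 < r i := fun i => Real.rpow_pos_of_pos (hlam i) _
  have hC := (cauchy_psd r hrpos).mul_mul_conjTranspose_same (Matrix.diagonal d)
  have heq : Matrix.diagonal d * (Matrix.of fun i j : Fin n => 1 / (r i + r j)) *
      (Matrix.diagonal d)ᴴ = Matrix.of (fun i j : Fin n =>
        (2 / (lam i ^ s * lam j ^ (1 - s) + lam i ^ (1 - s) * lam j ^ s) : ℝ)) := by
    ext i j
    simp only [Matrix.diagonal_conjTranspose, star_trivial, Matrix.diagonal_mul,
      Matrix.mul_diagonal, Matrix.of_apply]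
    have ha := hlam i
    have hb := hlam j
    have key : lam i ^ s * lam j ^ (1 - s) + lam i ^ (1 - s) * lam j ^ s
        = lam i ^ s * lam j ^ s * (r i + r j) := by
      have h1 : lam i ^ s * lam i ^ (1 - 2*s) = lam i ^ (1 - s) := by
        rw [← Real.rpow_add ha]; congr 1; ring
      have h2 : lam j ^ s * lam j ^ (1 - 2*s) = lam j ^ (1 - s) := by
        rw [← Real.rpow_add hb]; congr 1; ring
      rw [hr, mul_add,
        show lam i ^ s * lam j ^ s * (lam i ^ (1 - 2*s)) =
          (lam i ^ s * lam i ^ (1 - 2*s)) * lam j ^ s by ring,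
        show lam i ^ s * lam j ^ s * (lam j ^ (1 - 2*s)) =
          lam i ^ s * (lam j ^ s * lam j ^ (1 - 2*s)) by ring, h1, h2]
      ring
    rw [key]
    simp only [hd]
    have hs2 : Real.sqrt 2 * Real.sqrt 2 = 2 := Real.mul_self_sqrt (by norm_num)
    have his : (0:ℝ) < lam i ^ s := Real.rpow_pos_of_pos ha _
    have hjs : (0:ℝ) < lam j ^ s := Real.rpow_pos_of_pos hb _
    have hrr : (0:ℝ) < r i + r j := add_pos (hrpos i) (hrpos j)
    rw [Real.rpow_neg ha.le, Real.rpow_neg hb.le]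
    field_simp
    ring_nf
    exact Real.sq_sqrt (by norm_num)
  rwa [heq] at hC

lemma part1 {N : ℕ} (s : ℝ) (σ : Mat N) (hσ : σ.PosDef)
    (Minv : Mat N →ₗ[ℂ] Mat N)
    (h1 : ∀ A, Minv ((1/2 : ℂ) • (mpow σ hσ s * A * mpow σ hσ (1 - s) +
            mpow σ hσ (1 - s) * A * mpow σ hσ s)) = A) :
    IsCP Minv := by
  classical
  set U : Mat N := (hσ.1.eigenvectorUnitary : Mat N) with hUdef
  have hU1 : star U * U = 1 := Matrix.mem_unitaryGroup_iff'.mp hσ.1.eigenvectorUnitary.2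
  have hU2 : U * star U = 1 := Matrix.mem_unitaryGroup_iff.mp hσ.1.eigenvectorUnitary.2
  have hc : ∀ Y : Mat N, star U * (U * Y) = Y := fun Y => by
    rw [← Matrix.mul_assoc, hU1, Matrix.one_mul]
  have hc' : ∀ Y : Mat N, U * (star U * Y) = Y := fun Y => by
    rw [← Matrix.mul_assoc, hU2, Matrix.one_mul]
  set lam : Fin N → ℝ := hσ.1.eigenvalues with hlamdef
  have hlam : ∀ i, 0 < lam i := hσ.eigenvalues_pos
  set D : ℝ → Mat N := fun t => Matrix.diagonal (fun i => ((lam i ^ t : ℝ) : ℂ)) with hDdef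
  have hmpow : ∀ t, mpow σ hσ t = U * D t * star U := fun t => rfl
  set Kr : Matrix (Fin N) (Fin N) ℝ := Matrix.of (fun i j : Fin N =>
      (2 / (lam i ^ s * lam j ^ (1 - s) + lam i ^ (1 - s) * lam j ^ s) : ℝ)) with hKrdef
  obtain ⟨Br, hBr⟩ : ∃ B : Matrix (Fin N) (Fin N) ℝ, Matrix.of (fun i j : Fin N =>
      (2 / (lam i ^ s * lam j ^ (1 - s) + lam i ^ (1 - s) * lam j ^ s) : ℝ)) = Bᴴ * B := by
    open scoped MatrixOrder in exact CStarAlgebra.nonneg_iff_eq_star_mul_self.mp (part2 s lam hlam).nonneg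
  set V : Fin N → Mat N := fun j =>
    U * Matrix.diagonal (fun i => ((Br j i : ℝ) : ℂ)) * star U with hVdef
  have hVH : ∀ j, (V j)ᴴ = V j := by
    intro j
    rw [hVdef]
    rw [Matrix.conjTranspose_mul, Matrix.conjTranspose_mul, Matrix.diagonal_conjTranspose]
    rw [← Matrix.star_eq_conjTranspose, ← Matrix.star_eq_conjTranspose, star_star]
    have : (star fun i => ((Br j i : ℝ) : ℂ)) = fun i => ((Br j i : ℝ) : ℂ) := by
      funext i
      simp [Pi.star_apply, RCLike.star_def, Complex.conj_ofReal]
    rw [this, ← Matrix.mul_assoc]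
  refine ⟨N, V, fun A => ?_⟩
  set C : Mat N := star U * A * U with hCdef
  have conj3 : ∀ (d e : Fin N → ℂ) (X : Mat N),
      (U * Matrix.diagonal d * star U) * X * (U * Matrix.diagonal e * star U)
        = U * (Matrix.diagonal d * (star U * X * U) * Matrix.diagonal e) * star U := by
    intro d e X
    simp only [Matrix.mul_assoc]
  -- the Kraus sum
  set Y : Mat N := ∑ j, Matrix.diagonal (fun i => ((Br j i : ℝ) : ℂ)) * C *
      Matrix.diagonal (fun i => ((Br j i : ℝ) : ℂ)) with hYdef
  have hPhi : (∑ j, (V j)ᴴ * A * V j) = U * Y * star U := by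
    rw [hYdef, Matrix.mul_sum, Matrix.sum_mul]
    refine Finset.sum_congr rfl fun j _ => ?_
    rw [hVH j, hVdef, conj3]
  have hY : ∀ i k, Y i k = ((Kr i k : ℝ) : ℂ) * C i k := by
    intro i k
    rw [hYdef]
    simp only [Matrix.sum_apply, Matrix.diagonal_mul, Matrix.mul_diagonal]
    have h2 : Kr i k = ∑ x, Br x i * Br x k := by
      rw [hKrdef, hBr]
      simp [Matrix.mul_apply, Matrix.conjTranspose_apply]
    rw [h2]
    push_cast
    rw [Finset.sum_mul]
    exact Finset.sum_congr rfl fun j _ => by ring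
  -- key scalar fact
  have hden : ∀ i k, (0:ℝ) < lam i ^ s * lam k ^ (1 - s) + lam i ^ (1 - s) * lam k ^ s :=
    fun i k => add_pos (mul_pos (Real.rpow_pos_of_pos (hlam i) _) (Real.rpow_pos_of_pos (hlam k) _))
      (mul_pos (Real.rpow_pos_of_pos (hlam i) _) (Real.rpow_pos_of_pos (hlam k) _))
  have claim : (1/2 : ℂ) • (mpow σ hσ s * (∑ j, (V j)ᴴ * A * V j) * mpow σ hσ (1 - s) +
      mpow σ hσ (1 - s) * (∑ j, (V j)ᴴ * A * V j) * mpow σ hσ s) = A := by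
    rw [hPhi, hmpow, hmpow, conj3, conj3]
    have hYc : star U * (U * Y * star U) * U = Y := by
      simp only [Matrix.mul_assoc, hc, hU1, Matrix.mul_one]
    rw [hYc]
    rw [show U * (D s * Y * D (1-s)) * star U + U * (D (1-s) * Y * D s) * star U
        = U * ((D s * Y * D (1-s)) + (D (1-s) * Y * D s)) * star U by
      rw [Matrix.mul_add, Matrix.add_mul]]
    rw [show (1/2 : ℂ) • (U * ((D s * Y * D (1-s)) + (D (1-s) * Y * D s)) * star U)
        = U * ((1/2 : ℂ) • ((D s * Y * D (1-s)) + (D (1-s) * Y * D s))) * star U by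
      rw [Matrix.mul_smul, Matrix.smul_mul]]
    have hinner : (1/2 : ℂ) • ((D s * Y * D (1-s)) + (D (1-s) * Y * D s)) = C := by
      ext i k
      simp only [Matrix.smul_apply, Matrix.add_apply, hDdef, Matrix.diagonal_mul,
        Matrix.mul_diagonal, smul_eq_mul]
      rw [hY i k]
      have hKik : Kr i k = 2 / (lam i ^ s * lam k ^ (1 - s) + lam i ^ (1 - s) * lam k ^ s) := rfl
      rw [hKik]
      rw [show ((lam i ^ s : ℝ):ℂ) * (((2 / (lam i ^ s * lam k ^ (1 - s) + lam i ^ (1 - s) * lam k ^ s) : ℝ):ℂ) * C i k) * ((lam k ^ (1-s) : ℝ):ℂ)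
          + ((lam i ^ (1-s) : ℝ):ℂ) * (((2 / (lam i ^ s * lam k ^ (1 - s) + lam i ^ (1 - s) * lam k ^ s) : ℝ):ℂ) * C i k) * ((lam k ^ s : ℝ):ℂ)
          = (((2 / (lam i ^ s * lam k ^ (1 - s) + lam i ^ (1 - s) * lam k ^ s)
              * (lam i ^ s * lam k ^ (1 - s) + lam i ^ (1 - s) * lam k ^ s) : ℝ)):ℂ) * C i k by
        push_cast; ring]
      rw [div_mul_cancel₀ _ (hden i k).ne']
      push_cast
      ring
    rw [hinner, hCdef]
    simp only [Matrix.mul_assoc, hc', hU2, Matrix.mul_one]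
  have := h1 (∑ j, (V j)ᴴ * A * V j)
  rw [claim] at this
  exact this

/-- for `m_s = ½(δ_s + δ_{1-s})`, the inverse of
`M_{m_s}(A) = ½(σ^s A σ^{1-s} + σ^{1-s} A σ^s)` is completely positive for every positive
definite `σ` of trace one; equivalently, for positive `λ_i` the matrix with entries
`2/(λ_i^s λ_j^{1-s} + λ_i^{1-s} λ_j^s)` is positive semidefinite. -/
theorem ms_inverse_CP (N : ℕ) (hN : 2 ≤ N) (s : ℝ) (hs : s ∈ Set.Icc (0:ℝ) 1) :
    (∀ (σ : Mat N) (hσ : σ.PosDef), σ.trace = 1 →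
      ∀ Minv : Mat N →ₗ[ℂ] Mat N,
        ((∀ A, Minv ((1/2 : ℂ) • (mpow σ hσ s * A * mpow σ hσ (1 - s) +
            mpow σ hσ (1 - s) * A * mpow σ hσ s)) = A) ∧
          (∀ A, (1/2 : ℂ) • (mpow σ hσ s * Minv A * mpow σ hσ (1 - s) +
            mpow σ hσ (1 - s) * Minv A * mpow σ hσ s) = A)) →
        IsCP Minv) ∧
    (∀ lam : Fin N → ℝ, (∀ i, 0 < lam i) →
      Matrix.PosSemidef (Matrix.of fun i j : Fin N =>
        (2 / (lam i ^ s * lam j ^ (1 - s) + lam i ^ (1 - s) * lam j ^ s) : ℝ))) := by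
  constructor
  · intro σ hσ _ Minv h
    exact part1 s σ hσ Minv h.1
  · intro lam hlam
    exact part2 s lam hlam
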